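/- arXiv:2404.01180 — 3 statements merged into one kernel-verified Lean document; each statement's English description precedes it below -/
import Mathlib

section
/- Let k be an algebraically closed field of characteristic p > 0, let M be an abelian group, and let M' ⊆ M be a subgroup such that the quotient M/M' is a torsion p-group (every element has order a power of p). Then the restriction map Hom(M, kˣ) → Hom(M', kˣ), φ ↦ φ|_{M'}, is a group isomorphism. -/
/-- `kˣ` is `ℕ`-rootable when `k` is algebraically closed. -/
noncomputable def unitsRootableNat (k : Type*) [Field k] [IsAlgClosed k] : RootableBy kˣ ℕ :=
  rootableByOfPowLeftSurj _ _ fun {n} hn x => by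
    obtain ⟨z, hz⟩ := IsAlgClosed.exists_pow_nat_eq (x : k) (Nat.pos_of_ne_zero hn)
    have hz0 : z ≠ 0 := by
      rintro rfl
      rw [zero_pow hn] at hz
      exact x.ne_zero hz.symm
    exact ⟨Units.mk0 z hz0, Units.ext (by simp [hz])⟩

/-- `Additive kˣ` is `ℤ`-divisible when `k` is algebraically closed. -/
noncomputable def unitsDivisibleInt (k : Type*) [Field k] [IsAlgClosed k] :
    DivisibleBy (Additive kˣ) ℤ :=
  letI := unitsRootableNat k
  letI : RootableBy kˣ ℤ := Group.rootableByIntOfRootableByNat kˣ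
  { div := fun a n => Additive.ofMul (RootableBy.root a.toMul n)
    div_zero := fun a => by
      simp [RootableBy.root_zero]
    div_cancel := fun {n} a hn => by
      show n • Additive.ofMul (RootableBy.root a.toMul n) = a
      rw [← ofMul_zpow, RootableBy.root_cancel _ hn]
      rfl }

theorem aux_ppow_inj (k : Type*) [Field k] [IsAlgClosed k] (p : ℕ) [CharP k p] (hp : 0 < p)
    (n : ℕ) {a b : kˣ} (h : a ^ p ^ n = b ^ p ^ n) : a = b := by
  have hprime : Fact p.Prime :=
    ⟨(CharP.char_is_prime_or_zero k p).resolve_right (by omega)⟩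
  induction n with
  | zero => simpa using h
  | succ n ih =>
    apply ih
    apply Units.ext
    apply frobenius_inj k p
    have := congrArg (Units.val) h
    simp only [Units.val_pow_eq_pow_val] at this
    simpa [frobenius_def, ← pow_mul, pow_succ] using this

/-- Let `k` be an algebraically closed field of characteristic `p > 0`, let `M` be an
abelian group, and let `M' ⊆ M` be a subgroup such that the quotient `M/M'` is a
torsion `p`-group (every element has order a power of `p`). Then the restriction map
`Hom(M, kˣ) → Hom(M', kˣ)`, `φ ↦ φ|_{M'}`, is a group isomorphism (it is a group
homomorphism, and it is bijective). -/
theorem restriction_of_homs_to_units_bijective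
    (k : Type*) [Field k] [IsAlgClosed k] (p : ℕ) [CharP k p] (hp : 0 < p)
    (M : Type*) [CommGroup M] (M' : Subgroup M)
    (hq : ∀ x : M ⧸ M', ∃ n : ℕ, orderOf x = p ^ n) :
    ∃ res : (M →* kˣ) →* (M' →* kˣ),
      (∀ φ : M →* kˣ, res φ = φ.comp M'.subtype) ∧ Function.Bijective res := by
  refine ⟨{ toFun := fun φ => φ.comp M'.subtype
            map_one' := rfl
            map_mul' := fun φ ψ => rfl }, fun φ => rfl, ?_, ?_⟩
  · -- injectivity
    rw [injective_iff_map_eq_one]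
    intro φ hφ
    ext x
    obtain ⟨n, hn⟩ := hq (x : M ⧸ M')
    have hmem : x ^ p ^ n ∈ M' := by
      rw [← QuotientGroup.eq_one_iff]
      have h2 : ((x : M ⧸ M')) ^ p ^ n = 1 := by rw [← hn]; exact pow_orderOf_eq_one _
      simpa using h2
    have h1 : φ x ^ p ^ n = 1 := by
      rw [← map_pow]
      have := congrFun (congrArg (fun (f : M' →* kˣ) => (f : M' → kˣ)) hφ) ⟨x ^ p ^ n, hmem⟩
      simpa using this
    have := aux_ppow_inj k p hp n (a := φ x) (b := 1) (by simpa using h1)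
    simpa using this
  · -- surjectivity
    intro f
    letI := unitsDivisibleInt k
    have baer : Module.Baer ℤ (Additive kˣ) := Module.Baer.of_divisible _
    obtain ⟨h, hh⟩ := baer.extension_property_addMonoidHom
      (MonoidHom.toAdditive M'.subtype) (fun a b hab => by
        have : (M'.subtype a.toMul : M) = M'.subtype b.toMul := hab
        exact congrArg Additive.ofMul (Subtype.ext this))
      (MonoidHom.toAdditive f)
    refine ⟨MonoidHom.toAdditive.symm h, ?_⟩
    ext x
    have := congrFun (congrArg (fun (g : Additive M' →+ Additive kˣ) => (g : Additive M' → Additive kˣ)) hh) (Additive.ofMul x)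
    exact congrArg (fun y => ((Additive.toMul y : kˣ) : k)) this
end

section
/- Let k be an algebraically closed field, let Λ be a free abelian group of finite rank, and let E be a finite subgroup of Hom(Λ, kˣ). Define Λ₀ = {χ ∈ Λ : φ(χ) = 1 for all φ ∈ E}. Then a homomorphism ψ ∈ Hom(Λ, kˣ) satisfies ψ(χ) = 1 for all χ ∈ Λ₀ if and only if ψ ∈ E; that is, the kernel of the restriction map Hom(Λ, kˣ) → Hom(Λ₀, kˣ) is exactly E. -/
set_option synthInstance.maxHeartbeats 1000000
set_option maxHeartbeats 1000000

section Aux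

variable {k : Type*} [Field k]

/-- In a field of characteristic `p`, a `p`-th root of unity is trivial. -/
private lemma unit_eq_one_of_pow_char {p : ℕ} (hp : p.Prime) (hchar : CharP k p)
    (u : kˣ) (hu : u ^ p = 1) : u = 1 := by
  haveI := Fact.mk hp
  have h1 : (u : k) ^ p = 1 := by
    have := congrArg (Units.val) hu
    simpa using this
  have h2 : ((u : k) - 1) ^ p = 0 := by
    rw [sub_pow_char, h1, one_pow, sub_self]
  have h3 : (u : k) - 1 = 0 := pow_eq_zero_iff hp.ne_zero |>.mp h2
  ext
  simpa [sub_eq_zero] using h3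

/-- The exponent of a finite subgroup of `Hom(Λ, kˣ)` is nonzero in `k`. -/
private lemma exponent_cast_ne_zero {Λ : Type*} [AddCommGroup Λ]
    (E : AddSubgroup (Λ →+ Additive kˣ)) [Finite E] :
    ((AddMonoid.exponent E : k)) ≠ 0 := by
  intro h
  set n := AddMonoid.exponent ↥E with hn
  have hn0 : n ≠ 0 := AddMonoid.exponent_ne_zero_of_finite
  set p := ringChar k with hpdef
  haveI : CharP k p := ringChar.charP k
  have hdvd : p ∣ n := (CharP.cast_eq_zero_iff k p n).mp h
  have hp0 : p ≠ 0 := by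
    rintro hp0
    rw [hp0] at hdvd
    exact hn0 (zero_dvd_iff.mp hdvd)
  have hp : p.Prime := (CharP.char_is_prime_or_zero k p).resolve_right hp0
  obtain ⟨m, hm⟩ := hdvd
  have hmlt : ¬ ∀ g : ↥E, m • g = 0 := by
    intro hall
    have hdvd2 : n ∣ m := AddMonoid.exponent_dvd_of_forall_nsmul_eq_zero hall
    have hm0 : m ≠ 0 := by
      rintro rfl
      rw [mul_zero] at hm
      exact hn0 hm
    have h1 : n ≤ m := Nat.le_of_dvd (Nat.pos_of_ne_zero hm0) hdvd2
    have h2 : m < n := by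
      rw [hm]
      calc m = 1 * m := (one_mul m).symm
      _ < p * m := (Nat.mul_lt_mul_right (Nat.pos_of_ne_zero hm0)).mpr hp.one_lt
    omega
  push_neg at hmlt
  obtain ⟨g, hg⟩ := hmlt
  set φ : Λ →+ Additive kˣ := ((m • g : ↥E) : Λ →+ Additive kˣ) with hφ
  have hφ0 : φ ≠ 0 := by
    intro h0
    exact hg (Subtype.ext h0)
  have hpφ : p • φ = 0 := by
    have h1 : p • (m • g) = (0 : ↥E) := by
      rw [← mul_smul, ← hm]
      exact AddMonoid.exponent_nsmul_eq_zero g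
    have := congrArg (fun x : ↥E => (x : Λ →+ Additive kˣ)) h1
    simpa [hφ] using this
  obtain ⟨χ, hχ⟩ : ∃ χ : Λ, φ χ ≠ 0 := by
    by_contra hc
    push_neg at hc
    exact hφ0 (AddMonoidHom.ext fun χ => hc χ)
  have hval : p • (φ χ) = 0 := by
    have := congrArg (fun f : Λ →+ Additive kˣ => f χ) hpφ
    simpa using this
  have hu : (φ χ).toMul ^ p = 1 := by
    rw [← toMul_nsmul, hval]
    rfl
  have := unit_eq_one_of_pow_char hp ‹CharP k p› (φ χ).toMul hu
  exact hχ (by simpa [toMul_eq_one] using this)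

/-- For a finite abelian group `A` whose exponent is nonzero in the algebraically
closed field `k`, the character group `A →+ Additive kˣ` has the same cardinality. -/
private lemma card_dual_eq (k : Type*) [Field k] [IsAlgClosed k]
    (A : Type*) [AddCommGroup A] [Finite A]
    (h : ((AddMonoid.exponent A : k)) ≠ 0) :
    Nat.card (A →+ Additive kˣ) = Nat.card A := by
  haveI : NeZero ((Monoid.exponent (Multiplicative A) : k)) := by
    rw [Monoid.exponent_multiplicative]
    exact ⟨h⟩
  obtain ⟨e⟩ := CommGroup.monoidHom_mulEquiv_of_hasEnoughRootsOfUnity (Multiplicative A) k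
  calc Nat.card (A →+ Additive kˣ)
      = Nat.card (Multiplicative A →* kˣ) := Nat.card_congr AddMonoidHom.toMultiplicativeLeft
    _ = Nat.card (Multiplicative A) := Nat.card_congr e.toEquiv
    _ = Nat.card A := rfl

end Aux

/-- Let `k` be an algebraically closed field, let `Λ` be a free abelian group of
finite rank, and let `E` be a finite subgroup of `Hom(Λ, kˣ)` (written additively,
via `Additive kˣ`). With `Λ₀ = {χ ∈ Λ : φ(χ) = 1 for all φ ∈ E}`, a homomorphism
`ψ ∈ Hom(Λ, kˣ)` restricts trivially to `Λ₀` if and only if `ψ ∈ E`; that is, the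
kernel of the restriction map `Hom(Λ, kˣ) → Hom(Λ₀, kˣ)` is exactly `E`. -/
theorem ker_restriction_to_annihilator_eq_subgroup
    (k : Type*) [Field k] [IsAlgClosed k]
    (Λ : Type*) [AddCommGroup Λ] [Module.Free ℤ Λ] [Module.Finite ℤ Λ]
    (E : AddSubgroup (Λ →+ Additive kˣ)) (hE : Finite E) :
    ∀ ψ : Λ →+ Additive kˣ,
      (∀ χ : Λ, (∀ φ ∈ E, φ χ = 0) → ψ χ = 0) ↔ ψ ∈ E := by
  intro ψ
  refine ⟨fun hψ => ?_, fun hψE χ hχ => hχ ψ hψE⟩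
  classical
  -- the common kernel Λ₀
  set N : AddSubgroup Λ :=
    { carrier := {χ | ∀ φ ∈ E, φ χ = 0}
      zero_mem' := fun φ _ => map_zero φ
      add_mem' := fun {a b} ha hb φ hφ => by
        rw [map_add, ha φ hφ, hb φ hφ, add_zero]
      neg_mem' := fun {a} ha φ hφ => by
        rw [map_neg, ha φ hφ, neg_zero] } with hN
  have hmemN : ∀ χ : Λ, χ ∈ N ↔ ∀ φ ∈ E, φ χ = 0 := fun χ => Iff.rfl
  set n := AddMonoid.exponent ↥E with hn
  have hnk : ((n : k)) ≠ 0 := exponent_cast_ne_zero E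
  -- `n • χ ∈ N` for all `χ`
  have hnsmul : ∀ χ : Λ, n • χ ∈ N := by
    intro χ φ hφ
    have h1 : n • (⟨φ, hφ⟩ : ↥E) = 0 := AddMonoid.exponent_nsmul_eq_zero _
    have h2 : n • φ = 0 := by
      have := congrArg (fun x : ↥E => (x : Λ →+ Additive kˣ)) h1
      simpa using this
    calc φ (n • χ) = n • φ χ := map_nsmul φ n χ
      _ = (n • φ) χ := rfl
      _ = 0 := by rw [h2]; rfl
  -- the quotient Q = Λ / Λ₀ is finite
  haveI : AddGroup.FG Λ := Module.Finite.iff_addGroup_fg.mp ‹Module.Finite ℤ Λ›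
  haveI hQfin : Finite (Λ ⧸ N) := by
    refine AddCommGroup.finite_of_fg_torsion _ (fun q => ?_)
    refine isOfFinAddOrder_iff_nsmul_eq_zero.mpr ⟨n, Nat.pos_of_ne_zero
      AddMonoid.exponent_ne_zero_of_finite, ?_⟩
    obtain ⟨χ, rfl⟩ := QuotientAddGroup.mk_surjective q
    rw [← QuotientAddGroup.mk_nsmul]
    exact (QuotientAddGroup.eq_zero_iff _).mpr (hnsmul χ)
  -- exponent of Q divides n, hence is nonzero in k
  have hexpQ : ((AddMonoid.exponent (Λ ⧸ N) : k)) ≠ 0 := by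
    have hdvd : AddMonoid.exponent (Λ ⧸ N) ∣ n := by
      refine AddMonoid.exponent_dvd_of_forall_nsmul_eq_zero (fun q => ?_)
      obtain ⟨χ, rfl⟩ := QuotientAddGroup.mk_surjective q
      rw [← QuotientAddGroup.mk_nsmul]
      exact (QuotientAddGroup.eq_zero_iff _).mpr (hnsmul χ)
    obtain ⟨c, hc⟩ := hdvd
    intro h0
    apply hnk
    rw [hc, Nat.cast_mul, h0, zero_mul]
  -- cardinalities of the dual groups
  have hcardQ : Nat.card ((Λ ⧸ N) →+ Additive kˣ) = Nat.card (Λ ⧸ N) :=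
    card_dual_eq k _ hexpQ
  have hcardE : Nat.card (↥E →+ Additive kˣ) = Nat.card ↥E :=
    card_dual_eq k _ (exponent_cast_ne_zero E)
  haveI : Finite ((Λ ⧸ N) →+ Additive kˣ) :=
    (Nat.card_pos_iff.mp (hcardQ ▸ Nat.card_pos)).2
  haveI : Finite (↥E →+ Additive kˣ) :=
    (Nat.card_pos_iff.mp (hcardE ▸ Nat.card_pos)).2
  -- E embeds into the dual of Q
  have hEker : ∀ φ : ↥E, N ≤ (φ : Λ →+ Additive kˣ).ker := by
    intro φ χ hχ
    exact AddMonoidHom.mem_ker.mpr (hχ φ.1 φ.2)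
  set ι : ↥E → ((Λ ⧸ N) →+ Additive kˣ) :=
    fun φ => QuotientAddGroup.lift N (φ : Λ →+ Additive kˣ) (hEker φ) with hι
  have hι_inj : Function.Injective ι := by
    intro φ φ' h
    refine Subtype.ext (AddMonoidHom.ext fun χ => ?_)
    have := congrArg (fun f : (Λ ⧸ N) →+ Additive kˣ => f (QuotientAddGroup.mk χ)) h
    simpa [hι, QuotientAddGroup.lift_mk] using this
  -- Q embeds into the dual of E
  set J : Λ →+ (↥E →+ Additive kˣ) :=
    { toFun := fun χ =>
        { toFun := fun φ => (φ : Λ →+ Additive kˣ) χ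
          map_zero' := rfl
          map_add' := fun _ _ => rfl }
      map_zero' := by refine AddMonoidHom.ext fun φ => ?_; exact map_zero (φ : Λ →+ Additive kˣ)
      map_add' := fun a b => by refine AddMonoidHom.ext fun φ => ?_; exact map_add (φ : Λ →+ Additive kˣ) a b } with hJ
  have hJker : N ≤ J.ker := by
    intro χ hχ
    refine AddMonoidHom.mem_ker.mpr (AddMonoidHom.ext fun φ => ?_)
    exact hχ φ.1 φ.2
  set j : (Λ ⧸ N) →+ (↥E →+ Additive kˣ) := QuotientAddGroup.lift N J hJker with hj
  have hj_inj : Function.Injective j := by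
    refine (injective_iff_map_eq_zero j).mpr (fun q hq => ?_)
    obtain ⟨χ, rfl⟩ := QuotientAddGroup.mk_surjective q
    refine (QuotientAddGroup.eq_zero_iff _).mpr (fun φ hφ => ?_)
    have := congrArg (fun f : ↥E →+ Additive kˣ => f ⟨φ, hφ⟩)
      (by simpa [hj, QuotientAddGroup.lift_mk] using hq : J χ = 0)
    simpa [hJ] using this
  -- counting
  have h1 : Nat.card ↥E ≤ Nat.card (Λ ⧸ N) := by
    rw [← hcardQ]
    exact Nat.card_le_card_of_injective ι hι_inj
  have h2 : Nat.card (Λ ⧸ N) ≤ Nat.card ↥E := by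
    rw [← hcardE]
    exact Nat.card_le_card_of_injective j hj_inj
  have hbij : Function.Bijective ι := by
    refine (Nat.bijective_iff_injective_and_card ι).mpr ⟨hι_inj, ?_⟩
    rw [hcardQ]
    omega
  -- ψ descends to Q, hence comes from E
  have hψker : N ≤ ψ.ker := fun χ hχ => AddMonoidHom.mem_ker.mpr (hψ χ hχ)
  obtain ⟨φ, hφ⟩ := hbij.2 (QuotientAddGroup.lift N ψ hψker)
  have : (φ : Λ →+ Additive kˣ) = ψ := by
    refine AddMonoidHom.ext fun χ => ?_
    have := congrArg (fun f : (Λ ⧸ N) →+ Additive kˣ => f (QuotientAddGroup.mk χ)) hφ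
    simpa [hι, QuotientAddGroup.lift_mk] using this
  exact this ▸ φ.2
end

section
/- Let R be a commutative ring, let d be a positive integer that is invertible in R, and let u ∈ Rˣ be a unit of R. Then the R-algebra R[X]/(X^d − u) is étale over R (i.e. it is formally étale and of finite presentation). -/
private lemma pow_add_sq_zero' {B : Type*} [CommRing B] (b t : B) (ht : t * t = 0) (m : ℕ) :
    (b + t) ^ (m + 1) = b ^ (m + 1) + (m + 1 : ℕ) * b ^ m * t := by
  induction m with
  | zero => push_cast; ring
  | succ n ih =>
    have h : (b + t) ^ (n + 1 + 1) = (b + t) ^ (n + 1) * (b + t) := by ring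
    rw [h, ih]
    push_cast
    linear_combination ((n : B) + 1) * b ^ n * ht

open Polynomial in
/-- Let `R` be a commutative ring, let `d` be a positive integer that is invertible
in `R`, and let `u ∈ Rˣ` be a unit. Then the `R`-algebra `R[X]/(X^d − u)` is étale
over `R` (formally étale and of finite presentation). -/
theorem quotient_pow_sub_unit_etale
    (R : Type*) [CommRing R] (d : ℕ) (hd : 0 < d) (hdR : IsUnit (d : R)) (u : Rˣ) :
    Algebra.Etale R (R[X] ⧸ Ideal.span {X ^ d - C (u : R)}) := by
  obtain ⟨m, rfl⟩ : ∃ m, d = m + 1 := ⟨d - 1, (Nat.succ_pred_eq_of_pos hd).symm⟩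
  set f : R[X] := X ^ (m + 1) - C (u : R) with hf
  set J : Ideal R[X] := Ideal.span {f} with hJ
  have hfJ : Ideal.Quotient.mk J f = 0 :=
    Ideal.Quotient.eq_zero_iff_mem.mpr (Ideal.subset_span rfl)
  -- the root in the quotient
  set x : R[X] ⧸ J := Ideal.Quotient.mk J X with hx
  have hxd : x ^ (m + 1) = algebraMap R _ (u : R) := by
    have : Ideal.Quotient.mk J (X ^ (m + 1)) - Ideal.Quotient.mk J (C (u : R)) = 0 := by
      rw [← map_sub, hfJ]
    have h2 : Ideal.Quotient.mk J (C (u : R)) = algebraMap R _ (u : R) := by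
      rw [← Polynomial.algebraMap_eq, Ideal.Quotient.mk_algebraMap]
    rw [h2] at this
    rw [hx, ← map_pow]
    linear_combination this
  constructor
  · -- formally étale
    rw [Algebra.FormallyEtale.iff_comp_bijective]
    intro B _ _ I hI
    -- any alg hom sends x to a d-th root of u, hence to a unit
    have key : ∀ (C' : Type _) [CommRing C'] [Algebra R C'] (g : (R[X] ⧸ J) →ₐ[R] C'),
        g x ^ (m + 1) = algebraMap R C' (u : R) := by
      intro C' _ _ g
      rw [← map_pow, hxd, AlgHom.commutes]
    constructor
    · -- injective
      intro g₁ g₂ hg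
      set t : B := g₁ x - g₂ x with hts
      have htI : t ∈ I := by
        rw [← Ideal.Quotient.eq_zero_iff_mem, map_sub, sub_eq_zero]
        have := congrArg (fun h : (R[X] ⧸ J) →ₐ[R] B ⧸ I => h x) hg
        simpa using this
      have ht2 : t * t = 0 := by
        have : t * t ∈ I ^ 2 := by rw [pow_two]; exact Ideal.mul_mem_mul htI htI
        rw [hI] at this; simpa using this
      have hb : g₁ x = g₂ x + t := by ring
      have h1 := key B g₁
      have h2 := key B g₂
      rw [hb, pow_add_sq_zero' _ _ ht2, h2] at h1
      have hzero : ((m + 1 : ℕ) : B) * g₂ x ^ m * t = 0 := by linear_combination h1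
      have hbu : IsUnit (g₂ x) := by
        have : IsUnit (g₂ x ^ (m + 1)) := by rw [h2]; exact (u.isUnit).map (algebraMap R B)
        exact (isUnit_pow_iff m.succ_ne_zero).mp this
      have hcu : IsUnit (((m + 1 : ℕ) : B) * g₂ x ^ m) := by
        refine IsUnit.mul ?_ (hbu.pow m)
        have := hdR.map (algebraMap R B)
        rwa [map_natCast] at this
      have ht0 : t = 0 := hcu.mul_left_cancel (by rw [mul_zero]; exact hzero)
      have hxeq : g₁ x = g₂ x := by rw [hb, ht0, add_zero]
      apply Ideal.Quotient.algHom_ext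
      apply Polynomial.algHom_ext
      simpa [hx] using hxeq
    · -- surjective
      intro g
      obtain ⟨b, hb⟩ := Ideal.Quotient.mk_surjective (g x)
      have hbI : Ideal.Quotient.mk I (b ^ (m + 1) - algebraMap R B (u : R)) = 0 := by
        rw [map_sub, map_pow, hb, Ideal.Quotient.mk_algebraMap, key (B ⧸ I) g, sub_self]
      set e : B := b ^ (m + 1) - algebraMap R B (u : R) with he
      have heI : e ∈ I := Ideal.Quotient.eq_zero_iff_mem.mp hbI
      have hbu : IsUnit b := by
        rw [← IsNilpotent.isUnit_quotient_mk_iff (I := I) ⟨2, hI⟩, hb]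
        have : IsUnit (g x ^ (m + 1)) := by
          rw [key (B ⧸ I) g]; exact (u.isUnit).map (algebraMap R (B ⧸ I))
        exact (isUnit_pow_iff m.succ_ne_zero).mp this
      have hcu : IsUnit (((m + 1 : ℕ) : B) * b ^ m) := by
        refine IsUnit.mul ?_ (hbu.pow m)
        have := hdR.map (algebraMap R B)
        rwa [map_natCast] at this
      set w : B := ↑hcu.unit⁻¹ with hw
      have hcw : ((m + 1 : ℕ) : B) * b ^ m * w = 1 := by
        rw [hw]; exact hcu.mul_val_inv
      set b' : B := b - e * w with hb'
      have ht2 : (-(e * w)) * (-(e * w)) = 0 := by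
        have : e * e ∈ I ^ 2 := by rw [pow_two]; exact Ideal.mul_mem_mul heI heI
        rw [hI] at this
        have he2 : e * e = 0 := by simpa using this
        ring_nf
        linear_combination (w * w) * he2
      have hroot : b' ^ (m + 1) = algebraMap R B (u : R) := by
        have : b' = b + -(e * w) := by rw [hb']; ring
        rw [this, pow_add_sq_zero' _ _ ht2]
        have : ((m + 1 : ℕ) : B) * b ^ m * -(e * w) = -e := by
          linear_combination (-e) * hcw
        rw [this, he]; ring
      -- build the lift
      refine ⟨Ideal.Quotient.liftₐ J (aeval b') ?_, ?_⟩
      · intro a ha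
        rw [hJ, Ideal.mem_span_singleton] at ha
        obtain ⟨q, rfl⟩ := ha
        rw [map_mul]
        have : aeval b' f = 0 := by
          rw [hf, map_sub, map_pow, aeval_X, aeval_C, hroot, sub_self]
        rw [this, zero_mul]
      · apply Ideal.Quotient.algHom_ext
        apply Polynomial.algHom_ext
        have h1 : Ideal.Quotient.mk I b' = g x := by
          rw [hb', map_sub, hb]
          have : Ideal.Quotient.mk I (e * w) = 0 :=
            Ideal.Quotient.eq_zero_iff_mem.mpr (Ideal.mul_mem_right _ _ heI)
          rw [this, sub_zero]
        simp only [AlgHom.comp_apply, Ideal.Quotient.mkₐ_eq_mk, Ideal.Quotient.liftₐ_apply] at h1 ⊢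
        convert h1 using 2
        erw [Ideal.Quotient.lift_mk]
        simp
  · -- finite presentation
    exact Algebra.FinitePresentation.quotient (Submodule.fg_span_singleton _)
end
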